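/- Suppose every monomer type in a collection is either a 'cap' type or a 'body' type, every binding edge in every saturated configuration joins a body monomer to a cap monomer or a body monomer to a body monomer with at least one endpoint adjacent (through body monomers) to a cap or seed monomer, and in fact every polymer of a saturated configuration containing a body monomer contains a cap monomer or a seed monomer. Then the entropy of any saturated configuration is at most (number of seed monomers) + (number of cap monomers). -/
import Mathlib


/-- Suppose the monomers of a configuration (modeled as a graph `G` whose
vertices are the monomers and whose components are the polymers) are partitioned into
seed, cap and body monomers, and, in the given saturated configuration, every polymer
containing a body monomer contains a cap monomer or a seed monomer.  Then the entropy
(number of polymers) is at most (number of seed monomers) + (number of cap monomers). -/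
theorem tbn_saturated_entropy_le_seed_add_cap
    {V : Type*} [Fintype V] [DecidableEq V]
    (G : SimpleGraph V) [DecidableRel G.Adj] [Fintype G.ConnectedComponent]
    (Seed Cap Body : Finset V)
    (hcover : ∀ v : V, v ∈ Seed ∨ v ∈ Cap ∨ v ∈ Body)
    (hSC : Disjoint Seed Cap) (hSB : Disjoint Seed Body) (hCB : Disjoint Cap Body)
    (hanchor : ∀ v ∈ Body, ∃ w : V, (w ∈ Seed ∨ w ∈ Cap) ∧ G.Reachable v w) :
    Fintype.card G.ConnectedComponent ≤ Seed.card + Cap.card := by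
  have hsurj : Function.Surjective
      (fun x : (Seed ∪ Cap : Finset V) => G.connectedComponentMk x.1) := by
    intro c
    induction c using SimpleGraph.ConnectedComponent.ind with
    | _ v =>
      rcases hcover v with h | h | h
      · exact ⟨⟨v, Finset.mem_union_left _ h⟩, rfl⟩
      · exact ⟨⟨v, Finset.mem_union_right _ h⟩, rfl⟩
      · obtain ⟨w, hw, hr⟩ := hanchor v h
        refine ⟨⟨w, ?_⟩, ?_⟩
        · rcases hw with hw | hw
          · exact Finset.mem_union_left _ hw
          · exact Finset.mem_union_right _ hw
        · exact (SimpleGraph.ConnectedComponent.eq.mpr hr.symm)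
  calc Fintype.card G.ConnectedComponent ≤ Fintype.card (Seed ∪ Cap : Finset V) :=
        Fintype.card_le_of_surjective _ hsurj
    _ = (Seed ∪ Cap).card := Fintype.card_coe _
    _ ≤ Seed.card + Cap.card := Finset.card_union_le _ _
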